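/- Let G be a group and n a natural number. If the functor H^n(G, −) = Ext^n_{𝔽_pG}(𝔽_p, −) commutes with filtered colimits, then H^n(G, 𝔽_p) is finite-dimensional as an 𝔽_p-vector space. -/

import Mathlib

open CategoryTheory CategoryTheory.Limits Opposite

/-- The augmentation ring homomorphism. -/
noncomputable def augmentation (R : Type) [Ring R] (G : Type) [Group G] :
    MonoidAlgebra R G →+* R :=
  MonoidAlgebra.liftNCRingHom (RingHom.id R) (1 : G →* R) (fun _ _ => by simp)

/-- `𝔽_p` as an `𝔽_pG`-module with the trivial `G`-action. -/
noncomputable def trivialModule (p : ℕ) [Fact p.Prime] (G : Type) [Group G] :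
    ModuleCat (MonoidAlgebra (ZMod p) G) :=
  (ModuleCat.restrictScalars (augmentation (ZMod p) G)).obj (ModuleCat.of (ZMod p) (ZMod p))

/-- `H^n(G,-) = Ext^n_{𝔽_pG}(𝔽_p, -)`, as a functor with values in `𝔽_p`-vector spaces. -/
noncomputable def cohomologyFunctorFp (p : ℕ) [Fact p.Prime] (G : Type) [Group G] (n : ℕ) :
    ModuleCat (MonoidAlgebra (ZMod p) G) ⥤ ModuleCat (ZMod p) :=
  (Ext (ZMod p) (ModuleCat (MonoidAlgebra (ZMod p) G)) n).obj (op (trivialModule p G))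

/-! ### Auxiliary general lemmas about `Ext` computed via a projective resolution -/

noncomputable section

namespace Stmt5Aux

section ExtGeneral

variable {R : Type} [CommRing R] {C : Type 1} [Category.{0} C] [Abelian C] [Linear R C]
  [EnoughProjectives C]

/-- The cochain map `Hom(P, Y) ⟶ Hom(P, Y')` induced by postcomposition with `g : Y ⟶ Y'`. -/
def psi {X : C} (P : ProjectiveResolution X) {Y Y' : C} (g : Y ⟶ Y') :
    P.complex.linearYonedaObj R Y ⟶ P.complex.linearYonedaObj R Y' :=
  (HomologicalComplex.unopFunctor _ _).map
    ((NatTrans.mapHomologicalComplex (NatTrans.rightOp ((linearYoneda R C).map g))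
      (ComplexShape.down ℕ)).app P.complex).op

lemma psi_f_apply {X : C} (P : ProjectiveResolution X) {Y Y' : C} (g : Y ⟶ Y') (i : ℕ)
    (h : P.complex.X i ⟶ Y) : (psi (R := R) P g).f i h = h ≫ g := rfl

lemma linearYonedaObj_d_apply {X : C} (P : ProjectiveResolution X) (Y : C) (i j : ℕ)
    (h : P.complex.X i ⟶ Y) :
    (P.complex.linearYonedaObj R Y).d i j h = P.complex.d j i ≫ h := rfl

/-- Naturality (in the second variable) of the computation of `Ext` via a projective
resolution. -/
lemma ext_map_eq {X : C} (P : ProjectiveResolution X) {Y Y' : C} (g : Y ⟶ Y') (n : ℕ) :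
    ((Ext R C n).obj (op X)).map g =
      (P.isoExt n Y).hom ≫ HomologicalComplex.homologyMap (psi (R := R) P g) n ≫
        (P.isoExt n Y').inv := by
  have h := ProjectiveResolution.leftDerived_app_eq
    (NatTrans.rightOp ((linearYoneda R C).map g)) P n
  have hnat := congrArg Quiver.Hom.unop
    (HomologicalComplex.homologyOp_hom_naturality (φ := psi (R := R) P g) n)
  simp only [unop_comp, Quiver.Hom.unop_op] at hnat
  have key := (Iso.eq_inv_comp
    ((P.complex.linearYonedaObj R Y).homologyOp n).unop).mpr hnat
  dsimp only [Ext, Functor.flip, NatTrans.leftOp]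
  rw [h]
  change (P.isoLeftDerivedObj ((linearYoneda R C).obj Y).rightOp n).inv.unop ≫
    (HomologicalComplex.homologyMap ((NatTrans.mapHomologicalComplex (NatTrans.rightOp
      ((linearYoneda R C).map g)) (ComplexShape.down ℕ)).app P.complex) n).unop ≫
    (P.isoLeftDerivedObj ((linearYoneda R C).obj Y').rightOp n).hom.unop
    = (P.isoLeftDerivedObj ((linearYoneda R C).obj Y).rightOp n).inv.unop ≫
    (((((linearYoneda R C).obj Y).rightOp.mapHomologicalComplex
      (ComplexShape.down ℕ)).obj P.complex).unop.homologyOp n).inv.unop ≫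
    HomologicalComplex.homologyMap (psi (R := R) P g) n ≫
    (((((linearYoneda R C).obj Y').rightOp.mapHomologicalComplex
      (ComplexShape.down ℕ)).obj P.complex).unop.homologyOp n).hom.unop ≫
    (P.isoLeftDerivedObj ((linearYoneda R C).obj Y').rightOp n).hom.unop
  rw [cancel_epi]
  rw [show (HomologicalComplex.homologyMap ((NatTrans.mapHomologicalComplex (NatTrans.rightOp
      ((linearYoneda R C).map g)) (ComplexShape.down ℕ)).app P.complex) n).unop = _ from key]
  simp only [Category.assoc, Iso.unop, Quiver.Hom.unop_op]
  rfl

open HomologicalComplex in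
/-- If `W` is a product of countably many copies of `M`, then every sequence of classes in
`Ext^n(X, M)` (computed as homology) is realized by a single class in `Ext^n(X, W)`. -/
lemma exists_homology_preimage {X : C} (P : ProjectiveResolution X) (n : ℕ)
    {W M : C} (proj : ℕ → (W ⟶ M))
    (hex : ∀ (T : C) (f : ℕ → (T ⟶ M)), ∃ z : T ⟶ W, ∀ k, z ≫ proj k = f k)
    (hmono : ∀ (T : C) (a b : T ⟶ W), (∀ k, a ≫ proj k = b ≫ proj k) → a = b)
    (c : ℕ → (P.complex.linearYonedaObj R M).homology n) :
    ∃ x, ∀ k, HomologicalComplex.homologyMap (psi (R := R) P (proj k)) n x = c k := by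
  let KM := P.complex.linearYonedaObj R M
  let KW := P.complex.linearYonedaObj R W
  have hπ : Function.Surjective (KM.homologyπ n) :=
    (ModuleCat.epi_iff_surjective _).mp inferInstance
  choose u hu using fun k => hπ (c k)
  let z : ℕ → (P.complex.X n ⟶ M) := fun k => KM.iCycles n (u k)
  have hzd : ∀ k, P.complex.d (n+1) n ≫ z k = 0 := by
    intro k
    have h1 := congrArg (fun φ => φ (u k)) (KM.iCycles_d n (n+1))
    simp only [ConcreteCategory.comp_apply, Function.comp_apply] at h1
    rw [← linearYonedaObj_d_apply (R := R) P M n (n+1) (z k)]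
    exact h1
  obtain ⟨zW, hzW⟩ := hex (P.complex.X n) z
  have hdW : KW.d n (n+1) zW = 0 := by
    apply hmono
    intro k
    rw [linearYonedaObj_d_apply]; erw [zero_comp]; rw [Category.assoc, hzW k]
    exact hzd k
  let x' : KW.cycles n := KW.cyclesMk zW (n+1) (by simp) (by exact hdW)
  refine ⟨KW.homologyπ n x', fun k => ?_⟩
  have hiW : KW.iCycles n x' = zW := KW.i_cyclesMk zW (n+1) (by simp) (by exact hdW)
  have h3 : cyclesMap (psi (R := R) P (proj k)) n x' = u k := by
    apply (ModuleCat.mono_iff_injective (KM.iCycles n)).mp inferInstance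
    have h4 := congrArg (fun φ => φ x') (cyclesMap_i (psi (R := R) P (proj k)) n)
    simp only [ConcreteCategory.comp_apply, Function.comp_apply] at h4
    rw [h4, hiW, psi_f_apply, hzW k]
  have h2 := congrArg (fun φ => φ x') (homologyπ_naturality (psi (R := R) P (proj k)) n)
  simp only [ConcreteCategory.comp_apply, Function.comp_apply] at h2
  rw [h2, h3, hu k]

end ExtGeneral

/-! ### The trivial module `ℕ → 𝔽_p` as a filtered colimit of finite-dimensional submodules -/

variable (p : ℕ) [Fact p.Prime] (G : Type) [Group G]

def res : ModuleCat (ZMod p) ⥤ ModuleCat (MonoidAlgebra (ZMod p) G) :=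
  ModuleCat.restrictScalars (augmentation (ZMod p) G)

def Wmod : ModuleCat (MonoidAlgebra (ZMod p) G) :=
  (res p G).obj (ModuleCat.of (ZMod p) (ℕ → ZMod p))

def projW (k : ℕ) : Wmod p G ⟶ trivialModule p G :=
  (res p G).map (ModuleCat.ofHom (LinearMap.proj k : ((ℕ → ZMod p) →ₗ[ZMod p] ZMod p)))

lemma hexW (T : ModuleCat (MonoidAlgebra (ZMod p) G)) (f : ℕ → (T ⟶ trivialModule p G)) :
    ∃ z : T ⟶ Wmod p G, ∀ k, z ≫ projW p G k = f k := by
  refine ⟨ModuleCat.ofHom (X := T) (Y := Wmod p G) ⟨⟨fun t k => f k t, ?_⟩, ?_⟩, ?_⟩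
  · intro a b; funext k; exact map_add (f k).hom a b
  · intro a t; funext k; exact map_smul (f k).hom a t
  · intro k; rfl

lemma hmonoW (T : ModuleCat (MonoidAlgebra (ZMod p) G)) (a b : T ⟶ Wmod p G)
    (h : ∀ k, a ≫ projW p G k = b ≫ projW p G k) : a = b := by
  ext t
  funext k
  exact congrArg (fun φ => φ t) (h k)

abbrev Jc := {U : Submodule (ZMod p) (ℕ → ZMod p) // FiniteDimensional (ZMod p) U}

instance : Nonempty (Jc p) := ⟨⟨⊥, inferInstance⟩⟩

instance : IsDirected (Jc p) (· ≤ ·) :=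
  ⟨fun U V => ⟨⟨U.1 ⊔ V.1, by have := U.2; have := V.2; infer_instance⟩,
    Subtype.coe_le_coe.mp le_sup_left, Subtype.coe_le_coe.mp le_sup_right⟩⟩

def DD : Jc p ⥤ ModuleCat (MonoidAlgebra (ZMod p) G) where
  obj U := (res p G).obj (ModuleCat.of (ZMod p) U.1)
  map {U V} h := (res p G).map (ModuleCat.ofHom (Submodule.inclusion (Subtype.coe_le_coe.mpr (leOfHom h))))
  map_id U := by ext x; rfl
  map_comp f g := by ext x; rfl

def ccW : Cocone (DD p G) where
  pt := Wmod p G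
  ι := { app := fun U => (res p G).map (ModuleCat.ofHom U.1.subtype)
         naturality := by intro U V h; ext x; rfl }

def spx (x : ℕ → ZMod p) : Jc p :=
  ⟨Submodule.span (ZMod p) {x}, FiniteDimensional.span_of_finite _ (Set.finite_singleton x)⟩

lemma mem_spx (x : ℕ → ZMod p) : x ∈ (spx p x).1 :=
  Submodule.mem_span_singleton_self x

def leg (s : Cocone (DD p G)) (U : Jc p) (y : U.1) : s.pt := ModuleCat.Hom.hom (s.ι.app U) y

lemma leg_add (s : Cocone (DD p G)) (U : Jc p) (a b : U.1) :
    leg p G s U (a + b) = leg p G s U a + leg p G s U b :=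
  map_add (s.ι.app U).hom a b

lemma ccW_compat (s : Cocone (DD p G)) {U V : Jc p} (h : U ≤ V) (y : U.1) :
    leg p G s V ⟨y.1, h y.2⟩ = leg p G s U y :=
  congrArg (fun φ => φ y) (s.w (homOfLE h))

def descW (s : Cocone (DD p G)) : Wmod p G ⟶ s.pt := ModuleCat.ofHom (X := Wmod p G) (Y := s.pt) {
  toFun x := leg p G s (spx p x) ⟨x, mem_spx p x⟩
  map_add' x y := by
    have hfin : (({x, y} : Set (ℕ → ZMod p))).Finite := (Set.finite_singleton y).insert x
    set U : Jc p := ⟨Submodule.span (ZMod p) {x, y},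
      FiniteDimensional.span_of_finite _ hfin⟩ with hU
    have hx : x ∈ U.1 := Submodule.subset_span (Set.mem_insert _ _)
    have hy : y ∈ U.1 := Submodule.subset_span (Set.mem_insert_of_mem _ rfl)
    have hxy : x + y ∈ U.1 := add_mem hx hy
    have l1 : spx p x ≤ U := Submodule.span_le.mpr (Set.singleton_subset_iff.mpr hx)
    have l2 : spx p y ≤ U := Submodule.span_le.mpr (Set.singleton_subset_iff.mpr hy)
    have l3 : spx p (x + y) ≤ U := Submodule.span_le.mpr (Set.singleton_subset_iff.mpr hxy)
    show leg p G s (spx p (x + y)) ⟨x + y, mem_spx p _⟩ =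
      leg p G s (spx p x) ⟨x, mem_spx p x⟩ + leg p G s (spx p y) ⟨y, mem_spx p y⟩
    rw [← ccW_compat p G s l1 ⟨x, mem_spx p x⟩,
      ← ccW_compat p G s l2 ⟨y, mem_spx p y⟩,
      ← ccW_compat p G s l3 ⟨x + y, mem_spx p _⟩,
      ← leg_add]
    rfl
  map_smul' a x := by
    have hmem : a • x ∈ (spx p x).1 :=
      Submodule.smul_mem _ (augmentation (ZMod p) G a) (mem_spx p x)
    have l : spx p (a • x) ≤ spx p x :=
      Submodule.span_le.mpr (Set.singleton_subset_iff.mpr hmem)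
    show leg p G s (spx p (a • x)) ⟨a • x, mem_spx p _⟩ =
      a • leg p G s (spx p x) ⟨x, mem_spx p x⟩
    exact (ccW_compat p G s l ⟨a • x, mem_spx p _⟩).symm.trans
      (map_smul (s.ι.app (spx p x)).hom a ⟨x, mem_spx p x⟩) }

def ccW_isColimit : IsColimit (ccW p G) where
  desc s := descW p G s
  fac s U := by
    ext y
    have l : spx p y.1 ≤ U := Submodule.span_le.mpr (Set.singleton_subset_iff.mpr y.2)
    have h := ccW_compat p G s l ⟨y.1, mem_spx p _⟩
    show leg p G s (spx p y.1) ⟨y.1, mem_spx p _⟩ = leg p G s U y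
    rw [← h]
    rfl
  uniq s m hm := by
    ext x
    exact congrArg (fun φ => φ (⟨x, mem_spx p x⟩ : (DD p G).obj (spx p x))) (hm (spx p x))

end Stmt5Aux

end

/-- If `H^n(G,-)` over `𝔽_p` commutes with filtered colimits, then `H^n(G, 𝔽_p)` is a
finite-dimensional `𝔽_p`-vector space. -/
theorem stmt_5 (p : ℕ) [Fact p.Prime] (G : Type) [Group G] (n : ℕ)
    [PreservesFilteredColimits (cohomologyFunctorFp p G n)] :
    FiniteDimensional (ZMod p) ((cohomologyFunctorFp p G n).obj (trivialModule p G)) := by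
  open Stmt5Aux in
  by_contra hfin
  set M := trivialModule p G with hM
  set F := cohomologyFunctorFp p G n with hF
  haveI : Infinite (F.obj M) := by
    by_contra hinf
    rw [not_infinite_iff_finite] at hinf
    exact hfin (Module.finite_iff_finite.mpr hinf)
  let c : ℕ ↪ F.obj M := Infinite.natEmbedding _
  let P : ProjectiveResolution M := (HasProjectiveResolution.out (Z := M)).some
  obtain ⟨x', hx'⟩ := Stmt5Aux.exists_homology_preimage P n (Stmt5Aux.projW p G)
    (Stmt5Aux.hexW p G) (Stmt5Aux.hmonoW p G) (fun k => (P.isoExt n M).hom (c k))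
  set x : F.obj (Stmt5Aux.Wmod p G) := (P.isoExt n (Stmt5Aux.Wmod p G)).inv x' with hx
  have hFx : ∀ k, F.map (Stmt5Aux.projW p G k) x = c k := by
    intro k
    have h := congrArg (fun φ => φ x) (Stmt5Aux.ext_map_eq P (Stmt5Aux.projW p G k) n)
    simp only [ConcreteCategory.comp_apply, Function.comp_apply] at h
    have e1 : (P.isoExt n (Stmt5Aux.Wmod p G)).hom x = x' := by
      rw [hx]
      exact congrArg (fun φ => φ x') (P.isoExt n (Stmt5Aux.Wmod p G)).inv_hom_id
    refine h.trans ?_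
    change (P.isoExt n M).inv (HomologicalComplex.homologyMap
            (Stmt5Aux.psi (R := ZMod p) P (Stmt5Aux.projW p G k)) n
            ((P.isoExt n (Stmt5Aux.Wmod p G)).hom x)) = c k
    rw [e1, hx' k]
    exact congrArg (fun φ => φ (c k)) (P.isoExt n M).hom_inv_id
  have hFc : IsColimit (F.mapCocone (Stmt5Aux.ccW p G)) :=
    isColimitOfPreserves F (Stmt5Aux.ccW_isColimit p G)
  have hTc : IsColimit ((forget (ModuleCat (ZMod p))).mapCocone
      (F.mapCocone (Stmt5Aux.ccW p G))) := isColimitOfPreserves _ hFc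
  obtain ⟨U, y, hy⟩ := Types.jointly_surjective _ hTc x
  haveI : FiniteDimensional (ZMod p) U.1 := U.2
  haveI : Finite U.1 := Module.finite_iff_finite.mp U.2
  haveI : Finite ((Stmt5Aux.DD p G).obj U ⟶ M) := by
    haveI h1 : Finite ((Stmt5Aux.DD p G).obj U : Type) := inferInstanceAs (Finite U.1)
    haveI h2 : Finite (M : Type) := inferInstanceAs (Finite (ZMod p))
    apply Finite.of_injective
      (fun (f : (Stmt5Aux.DD p G).obj U ⟶ M) =>
        (f : ((Stmt5Aux.DD p G).obj U : Type) → (M : Type)))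
    intro f g hfg
    ext t
    exact congrFun hfg t
  obtain ⟨k, l, hkl, hfkl⟩ := Finite.exists_ne_map_eq_of_infinite
    (fun k => (Stmt5Aux.ccW p G).ι.app U ≫ Stmt5Aux.projW p G k)
  apply hkl
  apply c.injective
  have comp_app : ∀ m : ℕ, F.map (Stmt5Aux.projW p G m) (F.map ((Stmt5Aux.ccW p G).ι.app U) y)
      = F.map ((Stmt5Aux.ccW p G).ι.app U ≫ Stmt5Aux.projW p G m) y := by
    intro m
    exact (congrArg (fun φ => φ (y : F.obj ((Stmt5Aux.DD p G).obj U)))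
      (F.map_comp ((Stmt5Aux.ccW p G).ι.app U) (Stmt5Aux.projW p G m))).symm
  calc c k = F.map (Stmt5Aux.projW p G k) x := (hFx k).symm
    _ = F.map (Stmt5Aux.projW p G k) (F.map ((Stmt5Aux.ccW p G).ι.app U) y) := by rw [← hy]; rfl
    _ = F.map ((Stmt5Aux.ccW p G).ι.app U ≫ Stmt5Aux.projW p G k) y := comp_app k
    _ = F.map ((Stmt5Aux.ccW p G).ι.app U ≫ Stmt5Aux.projW p G l) y := by rw [hfkl]
    _ = F.map (Stmt5Aux.projW p G l) (F.map ((Stmt5Aux.ccW p G).ι.app U) y) := (comp_app l).symm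
    _ = F.map (Stmt5Aux.projW p G l) x := by rw [← hy]; rfl
    _ = c l := hFx l
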